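/- Let x, y, z be elements of the graph group G_F. If y ≤ xyz and xyz = x·y·z (i.e., |xyz| = |x| + |y| + |z|), then y ≤ xy. -/

import Mathlib

open Pointwise

namespace GraphGroupPaper

/-- The set of commutator relators: `gᵢ` and `gⱼ` commute for every pair of distinct
`i, j` with `{i,j} ∉ F`. -/
def Rels (k : ℕ) (F : Set (Sym2 (Fin k))) : Set (FreeGroup (Fin k)) :=
  {w | ∃ i j : Fin k, i ≠ j ∧ s(i, j) ∉ F ∧
      w = FreeGroup.of i * FreeGroup.of j * (FreeGroup.of i)⁻¹ * (FreeGroup.of j)⁻¹}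

/-- The graph group `G_F` with generators `g₁, …, g_k` and relations `gᵢgⱼ = gⱼgᵢ`
for all distinct `i, j` with `{i,j} ∉ F`. -/
abbrev Grp (k : ℕ) (F : Set (Sym2 (Fin k))) := PresentedGroup (Rels k F)

/-- The generator `gᵢ` of the graph group. -/
def gen (k : ℕ) (F : Set (Sym2 (Fin k))) (i : Fin k) : Grp k F :=
  PresentedGroup.of i

/-- The group element corresponding to a symbol: `(i, true)` stands for `gᵢ`,
`(i, false)` stands for `gᵢ⁻¹`. -/
def sym (k : ℕ) (F : Set (Sym2 (Fin k))) (α : Fin k × Bool) : Grp k F :=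
  if α.2 then gen k F α.1 else (gen k F α.1)⁻¹

/-- The product of the word `l` of symbols, as an element of the graph group. -/
def wordProd (k : ℕ) (F : Set (Sym2 (Fin k))) (l : List (Fin k × Bool)) : Grp k F :=
  (l.map (sym k F)).prod

/-- `|x|` : the length of a shortest word in the symbols representing `x`. -/
noncomputable def len {k : ℕ} {F : Set (Sym2 (Fin k))} (x : Grp k F) : ℕ :=
  sInf {n | ∃ l : List (Fin k × Bool), wordProd k F l = x ∧ l.length = n}

/-- The partial order on `G_F`:  `x ≤ y` iff `|y| = |x| + |x⁻¹y|`. -/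
def le {k : ℕ} {F : Set (Sym2 (Fin k))} (x y : Grp k F) : Prop :=
  len y = len x + len (x⁻¹ * y)

/-- `m` is the meet `x ∧ y` (greatest lower bound w.r.t. `le`). -/
def IsMeet {k : ℕ} {F : Set (Sym2 (Fin k))} (x y m : Grp k F) : Prop :=
  le m x ∧ le m y ∧ ∀ w, le w x → le w y → le w m

/-- `j` is the (finite) join `x ∨ y` (least upper bound w.r.t. `le`);
`x ∨ y` is finite iff such a `j` exists. -/
def IsJoin {k : ℕ} {F : Set (Sym2 (Fin k))} (x y j : Grp k F) : Prop :=
  le x j ∧ le y j ∧ ∀ w, le x w → le y w → le j w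

/-- `j` is the (finite) join of the set `S`. -/
def IsJoinSet {k : ℕ} {F : Set (Sym2 (Fin k))} (S : Set (Grp k F)) (j : Grp k F) : Prop :=
  (∀ s ∈ S, le s j) ∧ ∀ w, (∀ s ∈ S, le s w) → le j w

/-- `y` is a segment of `a` if `a = x·y·z` for some `x, z`. -/
def Segment {k : ℕ} {F : Set (Sym2 (Fin k))} (y a : Grp k F) : Prop :=
  ∃ x z, a = x * y * z ∧ len a = len x + len y + len z

/-- The left-invariant metric `dist(x,y) = |x⁻¹y|`. -/
noncomputable def dist {k : ℕ} {F : Set (Sym2 (Fin k))} (x y : Grp k F) : ℕ :=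
  len (x⁻¹ * y)

/-- A nonempty set `L` is convex if `x, z ∈ L` and `dist(x,y) + dist(y,z) = dist(x,z)`
imply `y ∈ L`. -/
def ConvexSet {k : ℕ} {F : Set (Sym2 (Fin k))} (L : Set (Grp k F)) : Prop :=
  L.Nonempty ∧ ∀ x z y : Grp k F, x ∈ L → z ∈ L →
    dist x y + dist y z = dist x z → y ∈ L

/-- An ideal: nonempty, downward closed, and closed under finite joins. -/
def IdealSet {k : ℕ} {F : Set (Sym2 (Fin k))} (I : Set (Grp k F)) : Prop :=
  I.Nonempty ∧ (∀ x ∈ I, ∀ y, le y x → y ∈ I) ∧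
    (∀ x ∈ I, ∀ y ∈ I, ∀ j, IsJoin x y j → j ∈ I)

/-- `H` is closed if both `H` and `H⁻¹` are ideals. -/
def ClosedSet {k : ℕ} {F : Set (Sym2 (Fin k))} (H : Set (Grp k F)) : Prop :=
  IdealSet H ∧ IdealSet H⁻¹

/-- `m` is a minimal element of `S` w.r.t. `le`. -/
def MinimalIn {k : ℕ} {F : Set (Sym2 (Fin k))} (S : Set (Grp k F)) (m : Grp k F) : Prop :=
  m ∈ S ∧ ∀ x ∈ S, le x m → x = m

/-- `l` is a reduced (i.e. shortest) word representing `x`. -/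
def MinWord {k : ℕ} {F : Set (Sym2 (Fin k))} (x : Grp k F) (l : List (Fin k × Bool)) : Prop :=
  wordProd k F l = x ∧ l.length = len x

open Classical in
/-- `#_α(x)`: the number of occurrences of the symbol `α` (not counting `α⁻¹`)
in a reduced word representing `x`. -/
noncomputable def symCount {k : ℕ} {F : Set (Sym2 (Fin k))} (α : Fin k × Bool)
    (x : Grp k F) : ℕ :=
  if h : ∃ l, MinWord x l then h.choose.count α else 0

/-- The symbol `α` occurs in `x`. -/
def Occurs {k : ℕ} {F : Set (Sym2 (Fin k))} (α : Fin k × Bool) (x : Grp k F) : Prop :=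
  0 < symCount α x

/-- `α` is a maximal symbol of `x`, i.e. `xα⁻¹ ≤ x`. -/
def MaxSym {k : ℕ} {F : Set (Sym2 (Fin k))} (α : Fin k × Bool) (x : Grp k F) : Prop :=
  le (x * (sym k F α)⁻¹) x

/-- A peak: an element with precisely one maximal symbol. -/
def IsPeak {k : ℕ} {F : Set (Sym2 (Fin k))} (p : Grp k F) : Prop :=
  ∃! α : Fin k × Bool, MaxSym α p

/-- An `α`-peak: a peak whose unique maximal symbol is `α`. -/
def AlphaPeak {k : ℕ} {F : Set (Sym2 (Fin k))} (α : Fin k × Bool) (p : Grp k F) : Prop :=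
  MaxSym α p ∧ ∀ β, MaxSym β p → β = α

/-- The set of generator indices occurring in `b`. -/
def Support {k : ℕ} {F : Set (Sym2 (Fin k))} (b : Grp k F) : Set (Fin k) :=
  {i | Occurs (i, true) b ∨ Occurs (i, false) b}

/-- `b` is connected: the generators occurring in `b` induce a connected subgraph of
the graph `([k], F)`. -/
def Conn {k : ℕ} {F : Set (Sym2 (Fin k))} (b : Grp k F) : Prop :=
  (SimpleGraph.induce (Support b) (SimpleGraph.fromEdgeSet F)).Connected

/-- `b` is cyclically reduced: `b ∧ b⁻¹ = 1`. -/
def CycRed {k : ℕ} {F : Set (Sym2 (Fin k))} (b : Grp k F) : Prop :=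
  IsMeet b b⁻¹ 1

-- ============ combinatorics ============

variable {k : ℕ} {F : Set (Sym2 (Fin k))}

def sinv (α : Fin k × Bool) : Fin k × Bool := (α.1, !α.2)

@[simp] lemma sinv_sinv (α : Fin k × Bool) : sinv (sinv α) = α := by simp [sinv]

@[simp] lemma sinv_fst (α : Fin k × Bool) : (sinv α).1 = α.1 := rfl

def Dep (F : Set (Sym2 (Fin k))) (i j : Fin k) : Prop := i = j ∨ s(i, j) ∈ F

def Comm (F : Set (Sym2 (Fin k))) (α β : Fin k × Bool) : Prop := ¬ Dep F α.1 β.1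

lemma Dep.self (i : Fin k) : Dep F i i := Or.inl rfl

lemma Dep.symm' {i j : Fin k} (h : Dep F i j) : Dep F j i := by
  rcases h with h | h
  · exact Or.inl h.symm
  · exact Or.inr (by rwa [Sym2.eq_swap])

lemma Comm.symm' {α β : Fin k × Bool} (h : Comm F α β) : Comm F β α := fun hd => h hd.symm'

lemma Comm.sinv_left {α β : Fin k × Bool} (h : Comm F α β) : Comm F (sinv α) β := h

lemma Comm.sinv_right {α β : Fin k × Bool} (h : Comm F α β) : Comm F α (sinv β) := h

/-- key index fact -/
lemma idx_absurd {i j : Fin k} {α β : Fin k × Bool} (hd : Dep F i j) (hc : Comm F α β)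
    (hα : α.1 = i ∨ α.1 = j) (hβ : β.1 = i ∨ β.1 = j) : False := by
  by_cases he : α.1 = β.1
  · exact hc (Or.inl he)
  · apply hc
    rcases hd with rfl | hd
    · rcases hα with rfl | rfl <;> rcases hβ with h2 | h2 <;> exact absurd h2.symm he
    · rcases hα with rfl | rfl <;> rcases hβ with hβ | hβ
      · exact absurd hβ.symm he
      · rw [← hβ] at hd; exact Or.inr hd
      · rw [← hβ] at hd; exact Or.inr (by rwa [Sym2.eq_swap])
      · exact absurd hβ.symm he

inductive SStep (F : Set (Sym2 (Fin k))) :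
    List (Fin k × Bool) → List (Fin k × Bool) → Prop
  | swap (l1 l2 : List (Fin k × Bool)) (α β : Fin k × Bool) (h : Comm F α β) :
      SStep F (l1 ++ α :: β :: l2) (l1 ++ β :: α :: l2)

def TEq (F : Set (Sym2 (Fin k))) : List (Fin k × Bool) → List (Fin k × Bool) → Prop :=
  Relation.EqvGen (SStep F)

lemma TEq.refl (l : List (Fin k × Bool)) : TEq F l l := Relation.EqvGen.refl l

lemma TEq.symm {l l' : List (Fin k × Bool)} (h : TEq F l l') : TEq F l' l :=
  Relation.EqvGen.symm _ _ h

lemma TEq.trans {a b c : List (Fin k × Bool)} (h : TEq F a b) (h' : TEq F b c) : TEq F a c :=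
  Relation.EqvGen.trans _ _ _ h h'

lemma SStep.teq {l l' : List (Fin k × Bool)} (h : SStep F l l') : TEq F l l' :=
  Relation.EqvGen.rel _ _ h

lemma teq_equivalence : Equivalence (TEq F) := Relation.EqvGen.is_equivalence _

lemma TEq.length {l l' : List (Fin k × Bool)} (h : TEq F l l') : l.length = l'.length := by
  induction h with
  | rel a b hab => cases hab with | swap l1 l2 α β h => simp
  | refl => rfl
  | symm a b _ ih => omega
  | trans a b c _ _ ih1 ih2 => omega

lemma TEq.cons {l l' : List (Fin k × Bool)} (a : Fin k × Bool) (h : TEq F l l') :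
    TEq F (a :: l) (a :: l') := by
  induction h with
  | rel x y hxy =>
      cases hxy with
      | swap l1 l2 α β h =>
          exact (SStep.swap (a :: l1) l2 α β h).teq
  | refl => exact TEq.refl _
  | symm x y _ ih => exact ih.symm
  | trans x y z _ _ ih1 ih2 => exact ih1.trans ih2

lemma TEq.append_left {l l' : List (Fin k × Bool)} (m : List (Fin k × Bool))
    (h : TEq F l l') : TEq F (m ++ l) (m ++ l') := by
  induction m with
  | nil => exact h
  | cons a m ih => exact ih.cons a

lemma TEq.append_right {l l' : List (Fin k × Bool)} (m : List (Fin k × Bool))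
    (h : TEq F l l') : TEq F (l ++ m) (l' ++ m) := by
  induction h with
  | rel x y hxy =>
      cases hxy with
      | swap l1 l2 α β h =>
          have := (SStep.swap l1 (l2 ++ m) α β h).teq
          simpa using this
  | refl => exact TEq.refl _
  | symm x y _ ih => exact ih.symm
  | trans x y z _ _ ih1 ih2 => exact ih1.trans ih2

/-- moving a letter over a commuting prefix -/
lemma teq_move {α : Fin k × Bool} {p : List (Fin k × Bool)} (q : List (Fin k × Bool))
    (h : ∀ δ ∈ p, Comm F α δ) : TEq F (p ++ α :: q) (α :: (p ++ q)) := by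
  induction p with
  | nil => exact TEq.refl _
  | cons δ p ih =>
      have h1 : TEq F (δ :: (p ++ α :: q)) (δ :: (α :: (p ++ q))) :=
        (ih (fun x hx => h x (List.mem_cons_of_mem _ hx))).cons δ
      have h2 : TEq F (δ :: α :: (p ++ q)) (α :: δ :: (p ++ q)) := by
        have := (SStep.swap [] (p ++ q) δ α ((h δ List.mem_cons_self).symm')).teq
        simpa using this
      simpa using h1.trans h2

-- ============ projections ============

def proj (i j : Fin k) (l : List (Fin k × Bool)) : List (Fin k × Bool) :=
  l.filter (fun a => decide (a.1 = i ∨ a.1 = j))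

lemma proj_nil (i j : Fin k) : proj i j ([] : List (Fin k × Bool)) = [] := rfl

lemma proj_cons (i j : Fin k) (a : Fin k × Bool) (l : List (Fin k × Bool)) :
    proj i j (a :: l) = if a.1 = i ∨ a.1 = j then a :: proj i j l else proj i j l := by
  simp only [proj, List.filter_cons]
  by_cases h : a.1 = i ∨ a.1 = j <;> simp [h]

lemma proj_cons_pos {i j : Fin k} {a : Fin k × Bool} (h : a.1 = i ∨ a.1 = j)
    (l : List (Fin k × Bool)) : proj i j (a :: l) = a :: proj i j l := by
  rw [proj_cons, if_pos h]

lemma proj_cons_neg {i j : Fin k} {a : Fin k × Bool} (h : ¬(a.1 = i ∨ a.1 = j))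
    (l : List (Fin k × Bool)) : proj i j (a :: l) = proj i j l := by
  rw [proj_cons, if_neg h]

lemma proj_append (i j : Fin k) (l m : List (Fin k × Bool)) :
    proj i j (l ++ m) = proj i j l ++ proj i j m := by
  simp [proj, List.filter_append]

/-- projection of a commuting list is empty -/
lemma proj_comm_nil {α : Fin k × Bool} {p : List (Fin k × Bool)}
    (hp : ∀ δ ∈ p, Comm F α δ) {i j : Fin k} (hd : Dep F i j) (hα : α.1 = i ∨ α.1 = j) :
    proj i j p = [] := by
  induction p with
  | nil => rfl
  | cons δ p ih =>
      have hδ : ¬(δ.1 = i ∨ δ.1 = j) := fun hc =>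
        idx_absurd hd (hp δ List.mem_cons_self) hα hc
      rw [proj_cons_neg hδ]
      exact ih (fun x hx => hp x (List.mem_cons_of_mem _ hx))

/-- easy direction: TEq preserves projections onto dependent pairs -/
lemma TEq.proj_eq {l l' : List (Fin k × Bool)} (h : TEq F l l') {i j : Fin k}
    (hd : Dep F i j) : proj i j l = proj i j l' := by
  induction h with
  | rel x y hxy =>
      cases hxy with
      | swap l1 l2 α β hc =>
          have key : proj i j (α :: β :: l2) = proj i j (β :: α :: l2) := by
            by_cases hα : α.1 = i ∨ α.1 = j
            · have hβ : ¬(β.1 = i ∨ β.1 = j) := fun hb => idx_absurd hd hc hα hb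
              rw [proj_cons_pos hα, proj_cons_neg hβ, proj_cons_neg hβ, proj_cons_pos hα]
            · by_cases hβ : β.1 = i ∨ β.1 = j
              · rw [proj_cons_neg hα, proj_cons_pos hβ, proj_cons_pos hβ, proj_cons_neg hα]
              · rw [proj_cons_neg hα, proj_cons_neg hβ, proj_cons_neg hβ, proj_cons_neg hα]
          rw [proj_append, proj_append, key]
  | refl => rfl
  | symm x y _ ih => exact ih.symm
  | trans x y z _ _ ih1 ih2 => exact ih1.trans ih2

/-- FRONT: pulling a letter to the front -/
lemma front {α : Fin k × Bool} (m : List (Fin k × Bool)) :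
    ∀ (w : List (Fin k × Bool)),
    (∀ i j, Dep F i j → (α.1 = i ∨ α.1 = j) → proj i j (α :: m) <+: proj i j w) →
    ∃ p q, w = p ++ α :: q ∧ ∀ δ ∈ p, Comm F α δ := by
  intro w
  induction w with
  | nil =>
      intro h
      have := h α.1 α.1 (Dep.self _) (Or.inl rfl)
      rw [proj_cons_pos (Or.inl rfl), proj_nil] at this
      exact absurd this.length_le (by simp)
  | cons δ w ih =>
      intro h
      by_cases hδα : δ = α
      · exact ⟨[], w, by rw [hδα]; rfl, by simp⟩
      by_cases hc : Comm F α δ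
      · obtain ⟨p, q, hw, hp⟩ := ih (fun i j hd hα => by
          have hδ : ¬(δ.1 = i ∨ δ.1 = j) := fun hb => idx_absurd hd hc hα hb
          have := h i j hd hα
          rwa [proj_cons_neg hδ] at this)
        exact ⟨δ :: p, q, by rw [hw]; rfl,
          fun x hx => by
            rcases List.mem_cons.mp hx with rfl | hx
            · exact hc
            · exact hp x hx⟩
      · exfalso
        have hd : Dep F α.1 δ.1 := not_not.mp hc
        have := h α.1 δ.1 hd (Or.inl rfl)
        rw [proj_cons_pos (Or.inl rfl), proj_cons_pos (Or.inr rfl)] at this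
        rcases this with ⟨t, ht⟩
        exact hδα (by injection ht with h1 _; exact h1.symm)

/-- hard direction of the projection lemma -/
lemma teq_of_proj : ∀ (l l' : List (Fin k × Bool)),
    (∀ i j, Dep F i j → proj i j l = proj i j l') → TEq F l l' := by
  intro l
  induction l with
  | nil =>
      intro l' h
      cases l' with
      | nil => exact TEq.refl _
      | cons δ t =>
          exfalso
          have := h δ.1 δ.1 (Dep.self _)
          rw [proj_nil, proj_cons_pos (Or.inl rfl)] at this
          simp at this
  | cons α m ih =>
      intro l' h
      obtain ⟨p, q, hw, hp⟩ := front m l' (fun i j hd _ => by rw [h i j hd])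
      have hq : ∀ i j, Dep F i j → proj i j m = proj i j (p ++ q) := by
        intro i j hd
        have hh := h i j hd
        rw [hw, proj_append] at hh
        by_cases hα : α.1 = i ∨ α.1 = j
        · rw [proj_cons_pos hα, proj_comm_nil hp hd hα, List.nil_append,
            proj_cons_pos hα] at hh
          rw [proj_append, proj_comm_nil hp hd hα, List.nil_append]
          injection hh
        · rw [proj_cons_neg hα, proj_cons_neg hα] at hh
          rw [proj_append]; exact hh
      have h1 : TEq F m (p ++ q) := ih _ hq
      have h3 : TEq F (p ++ α :: q) (α :: (p ++ q)) := teq_move q hp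
      rw [hw]
      exact (h1.cons α).trans h3.symm

/-- cancellation of a common head letter -/
lemma teq_cancel_head {γ : Fin k × Bool} {l1 l2 : List (Fin k × Bool)}
    (h : TEq F (γ :: l1) (γ :: l2)) : TEq F l1 l2 := by
  apply teq_of_proj
  intro i j hd
  have hh := h.proj_eq hd
  by_cases hγ : γ.1 = i ∨ γ.1 = j
  · rw [proj_cons_pos hγ, proj_cons_pos hγ] at hh
    injection hh
  · rwa [proj_cons_neg hγ, proj_cons_neg hγ] at hh

-- ============ reduced words ============

def NRed (F : Set (Sym2 (Fin k))) (l : List (Fin k × Bool)) : Prop :=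
  ∀ l', TEq F l l' → ∀ p (α : Fin k × Bool) q, l' ≠ p ++ α :: sinv α :: q

lemma NRed.nil : NRed F ([] : List (Fin k × Bool)) := by
  intro l' hl' p α q hq
  have := hl'.length
  rw [hq] at this
  simp at this

lemma NRed.of_teq {l l' : List (Fin k × Bool)} (h : NRed F l) (ht : TEq F l l') :
    NRed F l' := fun m hm => h m (ht.trans hm)

lemma NRed.tail {γ : Fin k × Bool} {l : List (Fin k × Bool)} (h : NRed F (γ :: l)) :
    NRed F l := by
  intro l' hl' p α q hq
  exact h (γ :: l') (hl'.cons γ) (γ :: p) α q (by rw [hq]; rfl)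

/-- the key closure fact: adding a non-cancellable letter preserves reducedness -/
lemma NRed.cons {α : Fin k × Bool} {l : List (Fin k × Bool)} (h : NRed F l)
    (hnc : ¬∃ m, TEq F l (sinv α :: m)) : NRed F (α :: l) := by
  intro w hw p β q hq
  subst hq
  obtain ⟨p₁, q₁, hw1, hp₁⟩ := front l (p ++ β :: sinv β :: q)
    (fun i j hd _ => by rw [hw.proj_eq hd])
  -- the case where p commutes with α and the cancelling pair is (α, sinv α) at p's end
  have main : ∀ δ ∈ p, Comm F α δ → True := fun _ _ _ => trivial
  have case_eq : β = α → (∀ δ ∈ p, Comm F α δ) → False := by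
    intro hβ hpc
    subst hβ
    have h1 : TEq F (p ++ β :: sinv β :: q) (β :: (p ++ sinv β :: q)) := teq_move _ hpc
    have h2 : TEq F (p ++ sinv β :: q) (sinv β :: (p ++ q)) :=
      teq_move _ (fun δ hδ => (hpc δ hδ : Comm F β δ))
    have h3 : TEq F (β :: l) (β :: sinv β :: (p ++ q)) := hw.trans (h1.trans (h2.cons β))
    exact hnc ⟨p ++ q, teq_cancel_head h3⟩
  rcases List.append_eq_append_iff.mp hw1 with ⟨a, ha1, ha2⟩ | ⟨c, hc1, hc2⟩
  · -- p₁ = p ++ a,  β :: sinv β :: q = a ++ α :: q₁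
    match a, ha2 with
    | [], ha2 =>
        -- β = α
        rw [List.nil_append] at ha2
        rw [List.append_nil] at ha1
        obtain ⟨h1, h2⟩ := List.cons.inj ha2
        exact case_eq h1 (by rw [← ha1]; exact hp₁)
    | [x], ha2 =>
        -- sinv β = α, but x = β ∈ p₁ commutes with α : contradiction
        rw [List.cons_append, List.nil_append] at ha2
        obtain ⟨h1, h2⟩ := List.cons.inj ha2
        obtain ⟨h3, _⟩ := List.cons.inj h2
        have hx : Comm F α x := hp₁ x (by rw [ha1]; simp)
        rw [← h1, ← h3] at hx
        exact hx (Dep.self _)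
    | x :: y :: c, ha2 =>
        -- α occurs inside q
        rw [List.cons_append, List.cons_append] at ha2
        obtain ⟨h1, h2⟩ := List.cons.inj ha2
        obtain ⟨h3, h4⟩ := List.cons.inj h2
        -- h4 : q = c ++ α :: q₁
        have hpall : ∀ δ ∈ p ++ β :: sinv β :: c, Comm F α δ := by
          intro δ hδ
          apply hp₁
          rw [ha1, ← h1, ← h3]
          simpa using hδ
        have hweq : p ++ β :: sinv β :: q = (p ++ β :: sinv β :: c) ++ α :: q₁ := by
          rw [h4]; simp
        have hmv : TEq F ((p ++ β :: sinv β :: c) ++ α :: q₁)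
            (α :: ((p ++ β :: sinv β :: c) ++ q₁)) := teq_move _ hpall
        have h5 : TEq F (α :: l) (α :: ((p ++ β :: sinv β :: c) ++ q₁)) :=
          hw.trans (hweq ▸ hmv)
        have h6 := teq_cancel_head h5
        exact h _ h6 p β (c ++ q₁) (by simp)
  · -- p = p₁ ++ c, α :: q₁ = c ++ β :: sinv β :: q
    match c, hc2 with
    | [], hc2 =>
        rw [List.nil_append] at hc2
        rw [List.append_nil] at hc1
        obtain ⟨h1, _⟩ := List.cons.inj hc2
        exact case_eq h1.symm (by rw [hc1]; exact hp₁)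
    | x :: c, hc2 =>
        -- α inside p : delete α from p, pair survives
        rw [List.cons_append] at hc2
        obtain ⟨h1, h2⟩ := List.cons.inj hc2
        -- h1 : α = x, h2 : q₁ = c ++ β :: sinv β :: q, hc1 : p = p₁ ++ x :: c
        have hmv : TEq F (p₁ ++ α :: q₁) (α :: (p₁ ++ q₁)) := teq_move _ hp₁
        have h5 : TEq F (α :: l) (α :: (p₁ ++ q₁)) := by
          refine hw.trans ?_
          rw [hc1, ← h1, h2]
          have : p₁ ++ α :: c ++ β :: sinv β :: q = p₁ ++ α :: (c ++ β :: sinv β :: q) := by simp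
          rw [this]
          have := teq_move (q := c ++ β :: sinv β :: q) (p := p₁) (α := α) hp₁
          exact this.trans (TEq.refl _)
        have h6 := teq_cancel_head h5
        refine h _ h6 (p₁ ++ c) β q ?_
        rw [h2]; simp

-- ============ group side ============

lemma wordProd_nil : wordProd k F [] = 1 := rfl

lemma wordProd_cons (a : Fin k × Bool) (l : List (Fin k × Bool)) :
    wordProd k F (a :: l) = sym k F a * wordProd k F l := by
  simp [wordProd]

lemma wordProd_append (l m : List (Fin k × Bool)) :
    wordProd k F (l ++ m) = wordProd k F l * wordProd k F m := by
  simp [wordProd]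

lemma sym_tt (i : Fin k) : sym k F (i, true) = gen k F i := by simp [sym]

lemma sym_ff (i : Fin k) : sym k F (i, false) = (gen k F i)⁻¹ := by simp [sym]

lemma sym_sinv (α : Fin k × Bool) : sym k F (sinv α) = (sym k F α)⁻¹ := by
  rcases α with ⟨i, b⟩
  cases b <;> simp [sym, sinv]

lemma gen_commute {i j : Fin k} (hij : i ≠ j) (hF : s(i, j) ∉ F) :
    Commute (gen k F i) (gen k F j) := by
  have hmem : (FreeGroup.of i * FreeGroup.of j * (FreeGroup.of i)⁻¹ * (FreeGroup.of j)⁻¹ :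
      FreeGroup (Fin k)) ∈ Rels k F := ⟨i, j, hij, hF, rfl⟩
  have h1 : ((QuotientGroup.mk (FreeGroup.of i * FreeGroup.of j * (FreeGroup.of i)⁻¹ *
      (FreeGroup.of j)⁻¹) : Grp k F)) = 1 :=
    (QuotientGroup.eq_one_iff _).mpr
      (Subgroup.subset_normalClosure hmem)
  have h2 : gen k F i * gen k F j * (gen k F i)⁻¹ * (gen k F j)⁻¹ = 1 := by
    exact h1
  exact commutatorElement_eq_one_iff_commute.mp h2

lemma sym_commute {α β : Fin k × Bool} (h : Comm F α β) : Commute (sym k F α) (sym k F β) := by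
  have hne : α.1 ≠ β.1 := fun he => h (Or.inl he)
  have hF : s(α.1, β.1) ∉ F := fun hf => h (Or.inr hf)
  have hg : Commute (gen k F α.1) (gen k F β.1) := gen_commute hne hF
  rcases α with ⟨i, bi⟩
  rcases β with ⟨j, bj⟩
  cases bi <;> cases bj <;>
    simp only [sym_tt, sym_ff] <;>
    first
      | exact hg
      | exact hg.inv_left
      | exact hg.inv_right
      | exact hg.inv_left.inv_right

lemma sym_mul_sinv (α : Fin k × Bool) : sym k F α * sym k F (sinv α) = 1 := by
  rw [sym_sinv, mul_inv_cancel]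

lemma TEq.wordProd_eq {l l' : List (Fin k × Bool)} (h : TEq F l l') :
    wordProd k F l = wordProd k F l' := by
  induction h with
  | rel x y hxy =>
      cases hxy with
      | swap l1 l2 α β hc =>
          simp only [wordProd_append, wordProd_cons, ← mul_assoc]
          have hcomm : wordProd k F l1 * sym k F α * sym k F β =
              wordProd k F l1 * sym k F β * sym k F α := by
            rw [mul_assoc, mul_assoc, (sym_commute hc).eq]
          rw [hcomm]
  | refl => rfl
  | symm x y _ ih => exact ih.symm
  | trans x y z _ _ ih1 ih2 => exact ih1.trans ih2

lemma wordProd_pair_cancel (p q : List (Fin k × Bool)) (α : Fin k × Bool) :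
    wordProd k F (p ++ α :: sinv α :: q) = wordProd k F (p ++ q) := by
  simp only [wordProd_append, wordProd_cons, ← mul_assoc]
  rw [mul_assoc (wordProd k F p), sym_mul_sinv, mul_one]

lemma wordProd_reverse (l : List (Fin k × Bool)) :
    wordProd k F (l.reverse.map sinv) = (wordProd k F l)⁻¹ := by
  induction l with
  | nil => simp [wordProd]
  | cons a l ih =>
      rw [wordProd_cons, List.reverse_cons, List.map_append, List.map_cons, List.map_nil,
        wordProd_append, ih, mul_inv_rev]
      congr 1
      rw [wordProd_cons, wordProd_nil, mul_one, sym_sinv]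

lemma exists_word (x : Grp k F) : ∃ l, wordProd k F l = x := by
  refine QuotientGroup.induction_on x ?_
  intro z
  refine FreeGroup.induction_on z ?_ ?_ ?_ ?_
  · exact ⟨[], rfl⟩
  · intro i
    refine ⟨[(i, true)], ?_⟩
    rw [wordProd_cons, wordProd_nil, mul_one]
    rfl
  · rintro i ⟨l, hl⟩
    refine ⟨l.reverse.map sinv, ?_⟩
    rw [wordProd_reverse, hl]
    rfl
  · rintro a b ⟨la, hla⟩ ⟨lb, hlb⟩
    refine ⟨la ++ lb, ?_⟩
    rw [wordProd_append, hla, hlb]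
    rfl

lemma len_le {x : Grp k F} {l : List (Fin k × Bool)} (h : wordProd k F l = x) :
    len x ≤ l.length := Nat.sInf_le ⟨l, h, rfl⟩

lemma exists_minword (x : Grp k F) : ∃ l, wordProd k F l = x ∧ l.length = len x := by
  obtain ⟨l, hl⟩ := exists_word x
  have hne : {n | ∃ l' : List (Fin k × Bool), wordProd k F l' = x ∧ l'.length = n}.Nonempty :=
    ⟨l.length, l, hl, rfl⟩
  exact Nat.sInf_mem hne

lemma len_mul_le (x y : Grp k F) : len (x * y) ≤ len x + len y := by
  obtain ⟨lx, hx, hlx⟩ := exists_minword x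
  obtain ⟨ly, hy, hly⟩ := exists_minword y
  have : wordProd k F (lx ++ ly) = x * y := by rw [wordProd_append, hx, hy]
  calc len (x * y) ≤ (lx ++ ly).length := len_le this
    _ = len x + len y := by simp [hlx, hly]

/-- geodesic words are reduced -/
lemma nred_of_geodesic {l : List (Fin k × Bool)} (h : l.length = len (wordProd k F l)) :
    NRed F l := by
  intro l' hl' p α q hq
  have hlen : l.length = l'.length := hl'.length
  have hprod : wordProd k F l = wordProd k F l' := hl'.wordProd_eq
  have hshort : wordProd k F (p ++ q) = wordProd k F l := by
    rw [hprod, hq, wordProd_pair_cancel]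
  have := len_le hshort
  rw [← h] at this
  rw [hq] at hlen
  simp at hlen
  rw [List.length_append] at this
  omega

-- ============ trace quotient and the action ============

def tsetoid (k : ℕ) (F : Set (Sym2 (Fin k))) : Setoid (List (Fin k × Bool)) :=
  ⟨TEq F, teq_equivalence⟩

def Trace (k : ℕ) (F : Set (Sym2 (Fin k))) := Quotient (tsetoid k F)

def mkT (l : List (Fin k × Bool)) : Trace k F := Quotient.mk (tsetoid k F) l

lemma mkT_eq_iff {l l' : List (Fin k × Bool)} : (mkT l : Trace k F) = mkT l' ↔ TEq F l l' :=
  ⟨fun h => Quotient.exact h, fun h => Quotient.sound h⟩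

def NRedT : Trace k F → Prop :=
  Quotient.lift (NRed F) (fun a b hab =>
    propext ⟨fun h => h.of_teq (hab : TEq F a b), fun h => h.of_teq (TEq.symm hab)⟩)

def RT (k : ℕ) (F : Set (Sym2 (Fin k))) := {t : Trace k F // NRedT t}

open Classical in
noncomputable def act (α : Fin k × Bool) (t : RT k F) : RT k F :=
  if h : ∃ m, t.1 = mkT (sinv α :: m) then
    ⟨mkT h.choose, by
      have hc := h.choose_spec
      have ht := t.2
      rw [hc] at ht
      exact (ht : NRed F (sinv α :: h.choose)).tail⟩
  else
    ⟨mkT (α :: t.1.out), by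
      have hout : t.1 = mkT t.1.out := (Quotient.out_eq t.1).symm
      have hred : NRed F t.1.out := by have h2 := t.2; rwa [hout] at h2
      refine (hred.cons ?_ : NRed F (α :: t.1.out))
      rintro ⟨m, hm⟩
      exact h ⟨m, by rw [hout]; exact Quotient.sound hm⟩⟩

lemma act_eq_cancel {α : Fin k × Bool} {l m : List (Fin k × Bool)} (t : RT k F)
    (ht : t.1 = mkT l) (h : TEq F l (sinv α :: m)) : (act α t).1 = mkT m := by
  have hex : ∃ m', t.1 = mkT (sinv α :: m') := ⟨m, by rw [ht]; exact Quotient.sound h⟩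
  rw [show act α t = _ from dif_pos hex]
  have hTEq : TEq F l (sinv α :: hex.choose) := Quotient.exact (ht.symm.trans hex.choose_spec)
  exact Quotient.sound (teq_cancel_head (hTEq.symm.trans h))

lemma act_eq_cons {α : Fin k × Bool} {l : List (Fin k × Bool)} (t : RT k F)
    (ht : t.1 = mkT l) (h : ¬∃ m, TEq F l (sinv α :: m)) : (act α t).1 = mkT (α :: l) := by
  have hex : ¬∃ m, t.1 = mkT (sinv α :: m) := by
    rintro ⟨m, hm⟩
    exact h ⟨m, Quotient.exact (ht.symm.trans hm)⟩
  rw [show act α t = _ from dif_neg hex]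
  apply Quotient.sound
  exact TEq.cons α (Quotient.exact ((Quotient.out_eq t.1).trans ht))

lemma act_sinv_act (α : Fin k × Bool) (t : RT k F) : act (sinv α) (act α t) = t := by
  obtain ⟨l, ht, hred⟩ : ∃ l, t.1 = mkT l ∧ NRed F l :=
    ⟨t.1.out, (Quotient.out_eq t.1).symm, by
      have h2 := t.2
      rw [← Quotient.out_eq t.1] at h2
      exact h2⟩
  by_cases hc : ∃ m, TEq F l (sinv α :: m)
  · obtain ⟨m, hm⟩ := hc
    have h1 : (act α t).1 = mkT m := act_eq_cancel t ht hm
    have hnc : ¬∃ m', TEq F m (sinv (sinv α) :: m') := by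
      rintro ⟨m', hm'⟩
      rw [sinv_sinv] at hm'
      exact hred _ (hm.trans (hm'.cons _)) [] (sinv α) m' (by rw [sinv_sinv]; rfl)
    have h2 : (act (sinv α) (act α t)).1 = mkT (sinv α :: m) := act_eq_cons _ h1 hnc
    apply Subtype.ext
    rw [h2, ht]
    exact Quotient.sound hm.symm
  · have h1 : (act α t).1 = mkT (α :: l) := act_eq_cons t ht hc
    have hm : TEq F (α :: l) (sinv (sinv α) :: l) := by rw [sinv_sinv]; exact TEq.refl _
    have h2 : (act (sinv α) (act α t)).1 = mkT l := act_eq_cancel _ h1 hm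
    apply Subtype.ext
    rw [h2, ht]

noncomputable def actP (α : Fin k × Bool) : Equiv.Perm (RT k F) where
  toFun := act α
  invFun := act (sinv α)
  left_inv := act_sinv_act α
  right_inv := fun t => by
    have h := act_sinv_act (sinv α) t
    rwa [sinv_sinv] at h

lemma teq_two_cancel {α β : Fin k × Bool} (h : Comm F α β) {l m n : List (Fin k × Bool)}
    (hα : TEq F l (sinv α :: m)) (hβ : TEq F l (sinv β :: n)) :
    ∃ m', TEq F m (sinv β :: m') ∧ TEq F n (sinv α :: m') := by
  have hmn : TEq F (sinv α :: m) (sinv β :: n) := hα.symm.trans hβ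
  obtain ⟨p, q, hw, hp⟩ := front n (sinv α :: m) (fun i j hd _ => by rw [← hmn.proj_eq hd])
  match p, hw, hp with
  | [], hw, hp =>
      rw [List.nil_append] at hw
      obtain ⟨h1, _⟩ := List.cons.inj hw
      have h1' := congrArg Prod.fst h1
      exact absurd (Or.inl h1' : Dep F _ _) h
  | x :: p, hw, hp =>
      rw [List.cons_append] at hw
      obtain ⟨h1, h2⟩ := List.cons.inj hw
      have hpcomm : ∀ δ ∈ p, Comm F (sinv β) δ := fun δ hδ => hp δ (List.mem_cons_of_mem _ hδ)
      have hm1 : TEq F m (sinv β :: (p ++ q)) := by rw [h2]; exact teq_move _ hpcomm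
      refine ⟨p ++ q, hm1, ?_⟩
      have hswap : TEq F (sinv α :: sinv β :: (p ++ q)) (sinv β :: sinv α :: (p ++ q)) := by
        have hs := (SStep.swap [] (p ++ q) (sinv α) (sinv β) (h : Comm F (sinv α) (sinv β))).teq
        simpa using hs
      have hfin : TEq F (sinv β :: n) (sinv β :: sinv α :: (p ++ q)) :=
        hβ.symm.trans (hα.trans ((hm1.cons _).trans hswap))
      exact teq_cancel_head hfin

lemma no_cancel_cons {α β : Fin k × Bool} (h : Comm F α β) {l : List (Fin k × Bool)}
    (hnc : ¬∃ m, TEq F l (sinv α :: m)) : ¬∃ m, TEq F (β :: l) (sinv α :: m) := by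
  rintro ⟨m, hm⟩
  obtain ⟨p, q, hw, hp⟩ := front m (β :: l) (fun i j hd _ => by rw [← hm.proj_eq hd])
  match p, hw, hp with
  | [], hw, hp =>
      rw [List.nil_append] at hw
      obtain ⟨h1, _⟩ := List.cons.inj hw
      have h1' := congrArg Prod.fst h1
      exact h (Or.inl h1'.symm)
  | x :: p, hw, hp =>
      rw [List.cons_append] at hw
      obtain ⟨h1, h2⟩ := List.cons.inj hw
      refine hnc ⟨p ++ q, ?_⟩
      rw [h2]
      exact teq_move _ (fun δ hδ => hp δ (List.mem_cons_of_mem _ hδ))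

lemma teq_cancel_over {α β : Fin k × Bool} (h : Comm F α β) {l m : List (Fin k × Bool)}
    (hm : TEq F l (sinv α :: m)) : TEq F (β :: l) (sinv α :: β :: m) := by
  have h1 : TEq F (β :: l) (β :: sinv α :: m) := hm.cons β
  have h2 : TEq F (β :: sinv α :: m) (sinv α :: β :: m) := by
    have hs := (SStep.swap [] m β (sinv α) (h.symm' : Comm F β (sinv α))).teq
    simpa using hs
  exact h1.trans h2

lemma act_comm_aux {α β : Fin k × Bool} (h : Comm F α β) (t : RT k F)
    {l : List (Fin k × Bool)} (ht : t.1 = mkT l)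
    (hcα : ∃ m, TEq F l (sinv α :: m)) (hcβ : ¬∃ n, TEq F l (sinv β :: n)) :
    act α (act β t) = act β (act α t) := by
  obtain ⟨m, hm⟩ := hcα
  apply Subtype.ext
  have hβ1 : (act β t).1 = mkT (β :: l) := act_eq_cons t ht hcβ
  have hLHS : (act α (act β t)).1 = mkT (β :: m) :=
    act_eq_cancel _ hβ1 (teq_cancel_over h hm)
  have hα1 : (act α t).1 = mkT m := act_eq_cancel t ht hm
  have hnc : ¬∃ n, TEq F m (sinv β :: n) := by
    rintro ⟨n, hn⟩
    apply hcβ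
    refine ⟨sinv α :: n, ?_⟩
    have h1 : TEq F l (sinv α :: sinv β :: n) := hm.trans (hn.cons _)
    have h2 : TEq F (sinv α :: sinv β :: n) (sinv β :: sinv α :: n) := by
      have hs := (SStep.swap [] n (sinv α) (sinv β) (h : Comm F (sinv α) (sinv β))).teq
      simpa using hs
    exact h1.trans h2
  have hRHS : (act β (act α t)).1 = mkT (β :: m) := act_eq_cons _ hα1 hnc
  rw [hLHS, hRHS]

lemma act_comm {α β : Fin k × Bool} (h : Comm F α β) (t : RT k F) :
    act α (act β t) = act β (act α t) := by
  obtain ⟨l, ht, hred⟩ : ∃ l, t.1 = mkT l ∧ NRed F l :=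
    ⟨t.1.out, (Quotient.out_eq t.1).symm, by
      have h2 := t.2
      rw [← Quotient.out_eq t.1] at h2
      exact h2⟩
  by_cases hcα : ∃ m, TEq F l (sinv α :: m) <;> by_cases hcβ : ∃ n, TEq F l (sinv β :: n)
  · obtain ⟨m, hm⟩ := hcα
    obtain ⟨n, hn⟩ := hcβ
    obtain ⟨m', hmm, hnm⟩ := teq_two_cancel h hm hn
    apply Subtype.ext
    have h1 : (act β t).1 = mkT n := act_eq_cancel t ht hn
    have h2 : (act α (act β t)).1 = mkT m' := act_eq_cancel _ h1 hnm
    have h3 : (act α t).1 = mkT m := act_eq_cancel t ht hm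
    have h4 : (act β (act α t)).1 = mkT m' := act_eq_cancel _ h3 hmm
    rw [h2, h4]
  · exact act_comm_aux h t ht hcα hcβ
  · exact (act_comm_aux h.symm' t ht hcβ hcα).symm
  · apply Subtype.ext
    have h1 : (act β t).1 = mkT (β :: l) := act_eq_cons t ht hcβ
    have h2 : (act α (act β t)).1 = mkT (α :: β :: l) :=
      act_eq_cons _ h1 (no_cancel_cons h hcα)
    have h3 : (act α t).1 = mkT (α :: l) := act_eq_cons t ht hcα
    have h4 : (act β (act α t)).1 = mkT (β :: α :: l) :=
      act_eq_cons _ h3 (no_cancel_cons h.symm' hcβ)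
    rw [h2, h4]
    apply Quotient.sound
    have hs := (SStep.swap [] l α β h).teq
    exact hs

lemma actP_commute {α β : Fin k × Bool} (h : Comm F α β) :
    Commute (actP α : Equiv.Perm (RT k F)) (actP β) := by
  apply Equiv.ext
  intro t
  show act α (act β t) = act β (act α t)
  exact act_comm h t

noncomputable def phiGen (k : ℕ) (F : Set (Sym2 (Fin k))) : Fin k → Equiv.Perm (RT k F) :=
  fun i => actP (i, true)

lemma rels_act : ∀ r ∈ Rels k F, FreeGroup.lift (phiGen k F) r = 1 := by
  rintro r ⟨i, j, hij, hF, rfl⟩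
  have h : Comm F ((i, true) : Fin k × Bool) ((j, true) : Fin k × Bool) := by
    rintro (he | hf)
    · exact hij he
    · exact hF hf
  have := commutatorElement_eq_one_iff_commute.mpr (actP_commute h)
  simp only [map_mul, map_inv, FreeGroup.lift_apply_of]
  exact this

noncomputable def Phi : Grp k F →* Equiv.Perm (RT k F) := PresentedGroup.toGroup rels_act

def emptyRT : RT k F := ⟨mkT [], (NRed.nil : NRed F [])⟩

lemma Phi_sym_apply (α : Fin k × Bool) (t : RT k F) :
    (Phi (sym k F α) : Equiv.Perm (RT k F)) t = act α t := by
  have hgen : ∀ i : Fin k, Phi (gen k F i) = (actP (i, true) : Equiv.Perm (RT k F)) :=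
    fun i => PresentedGroup.toGroup.of rels_act
  rcases α with ⟨i, b⟩
  cases b
  · rw [sym_ff, map_inv, hgen]
    rfl
  · rw [sym_tt, hgen]
    rfl

lemma Phi_eval {l : List (Fin k × Bool)} (h : NRed F l) :
    ((Phi (wordProd k F l) : Equiv.Perm (RT k F)) emptyRT).1 = mkT l := by
  induction l with
  | nil => rw [wordProd_nil, map_one]; rfl
  | cons α l ih =>
      rw [wordProd_cons, map_mul, Equiv.Perm.mul_apply, Phi_sym_apply]
      have hl := ih h.tail
      have hnc : ¬∃ m, TEq F l (sinv α :: m) := by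
        rintro ⟨m, hm⟩
        exact h _ (hm.cons α) [] α m rfl
      exact act_eq_cons _ hl hnc

/-- Uniqueness: reduced words representing the same element are shuffle equivalent. -/
lemma nred_teq {l1 l2 : List (Fin k × Bool)} (h1 : NRed F l1) (h2 : NRed F l2)
    (hp : wordProd k F l1 = wordProd k F l2) : TEq F l1 l2 := by
  have e1 := Phi_eval h1
  have e2 := Phi_eval h2
  rw [hp] at e1
  exact Quotient.exact (e1.symm.trans e2)

-- ============ extraction ============

lemma prefix_of_prefix_append {l a b : List (Fin k × Bool)} (h : l <+: a ++ b)
    (hl : l.length ≤ a.length) : l <+: a := by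
  obtain ⟨t, ht⟩ := h
  have h1 : (a ++ b).take l.length = l := by
    rw [← ht]
    exact List.take_left
  rw [List.take_append_of_le_length hl] at h1
  rw [← h1]
  exact List.take_prefix _ _

lemma teq_extract : ∀ (v w : List (Fin k × Bool)),
    (∀ i j, Dep F i j → proj i j v <+: proj i j w) → ∃ s, TEq F w (v ++ s) := by
  intro v
  induction v with
  | nil => exact fun w _ => ⟨w, TEq.refl _⟩
  | cons α v ih =>
      intro w h
      obtain ⟨p, q, hw, hp⟩ := front v w (fun i j hd _ => h i j hd)
      have hq : ∀ i j, Dep F i j → proj i j v <+: proj i j (p ++ q) := by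
        intro i j hd
        have hh := h i j hd
        rw [hw, proj_append] at hh
        by_cases hα : α.1 = i ∨ α.1 = j
        · rw [proj_cons_pos hα, proj_comm_nil hp hd hα, List.nil_append,
            proj_cons_pos hα] at hh
          rw [proj_append, proj_comm_nil hp hd hα, List.nil_append]
          exact (List.cons_prefix_cons.mp hh).2
        · rw [proj_cons_neg hα, proj_cons_neg hα] at hh
          rw [proj_append]
          exact hh
      obtain ⟨s, hs⟩ := ih (p ++ q) hq
      refine ⟨s, ?_⟩
      have h1 : TEq F w (α :: (p ++ q)) := by rw [hw]; exact teq_move _ hp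
      exact h1.trans (hs.cons α)

theorem stmt1' {k : ℕ} (hk : 1 ≤ k) {F : Set (Sym2 (Fin k))} (x y z : Grp k F)
    (h1 : len (x * y * z) = len y + len (y⁻¹ * (x * y * z)))
    (h2 : len (x * y * z) = len x + len y + len z) :
    len (x * y) = len y + len (y⁻¹ * (x * y)) := by
  obtain ⟨u, hu, hul⟩ := exists_minword x
  obtain ⟨v, hv, hvl⟩ := exists_minword y
  obtain ⟨t, htw, htl⟩ := exists_minword z
  obtain ⟨s, hs, hsl⟩ := exists_minword (y⁻¹ * (x * y * z))
  have hlen_s : len (y⁻¹ * (x * y * z)) = len x + len z := by omega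
  have huvt_prod : wordProd k F (u ++ v ++ t) = x * y * z := by
    rw [wordProd_append, wordProd_append, hu, hv, htw]
  have huvt_len : (u ++ v ++ t).length = len (x * y * z) := by
    simp only [List.length_append, hul, hvl, htl]
    omega
  have huvt_red : NRed F (u ++ v ++ t) :=
    nred_of_geodesic (by rw [huvt_prod]; exact huvt_len)
  have hvs_prod : wordProd k F (v ++ s) = x * y * z := by
    rw [wordProd_append, hv, hs]
    group
  have hvs_len : (v ++ s).length = len (x * y * z) := by
    simp only [List.length_append, hvl, hsl]
    omega
  have hvs_red : NRed F (v ++ s) :=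
    nred_of_geodesic (by rw [hvs_prod]; exact hvs_len)
  have hteq : TEq F (v ++ s) (u ++ v ++ t) :=
    nred_teq hvs_red huvt_red (by rw [hvs_prod, huvt_prod])
  have hpre : ∀ i j, Dep F i j → proj i j v <+: proj i j (u ++ v) := by
    intro i j hd
    have hh := hteq.proj_eq hd
    rw [proj_append, proj_append, proj_append] at hh
    have hpr : proj i j v <+: (proj i j u ++ proj i j v) ++ proj i j t := by
      rw [← hh]
      exact List.prefix_append _ _
    have hlenle : (proj i j v).length ≤ (proj i j u ++ proj i j v).length := by
      rw [List.length_append]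
      omega
    rw [proj_append]
    exact prefix_of_prefix_append hpr hlenle
  obtain ⟨s', hs'⟩ := teq_extract v (u ++ v) hpre
  have hprod : x * y = y * wordProd k F s' := by
    have hpe := hs'.wordProd_eq
    rw [wordProd_append, wordProd_append, hu, hv] at hpe
    exact hpe
  have hlen' : s'.length = len x := by
    have hle := hs'.length
    rw [List.length_append, List.length_append, hul, hvl] at hle
    omega
  have hle1 : len (y⁻¹ * (x * y)) ≤ len x := by
    have hw : wordProd k F s' = y⁻¹ * (x * y) := by
      rw [eq_inv_mul_iff_mul_eq, ← hprod]
    calc len (y⁻¹ * (x * y)) ≤ s'.length := len_le hw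
      _ = len x := hlen'
  have hxyle : len (x * y) ≤ len x + len y := len_mul_le x y
  have hxyge : len x + len y ≤ len (x * y) := by
    have h3 : len (x * y * z) ≤ len (x * y) + len z := len_mul_le _ _
    omega
  have hge : len x ≤ len (y⁻¹ * (x * y)) := by
    have heq : y⁻¹ * (x * y * z) = (y⁻¹ * (x * y)) * z := by group
    have h4 : len (y⁻¹ * (x * y * z)) ≤ len (y⁻¹ * (x * y)) + len z := by
      rw [heq]
      exact len_mul_le _ _
    omega
  omega


/-- if `y ≤ xyz` and `xyz = x·y·z`, then `y ≤ xy`. -/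
theorem stmt1 {k : ℕ} (hk : 1 ≤ k) {F : Set (Sym2 (Fin k))} (x y z : Grp k F)
    (h1 : le y (x * y * z))
    (h2 : len (x * y * z) = len x + len y + len z) :
    le y (x * y) :=
  stmt1' hk x y z h1 h2

end GraphGroupPaper
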